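/- Let r be an odd prime and let s, z be integers. If r² divides s² − 4z^r and r does not divide s, then r² divides s^r − 2^{r−1}·s. -/
import Mathlib


/-- Lemma (srs): let `r` be an odd prime and `s, z` integers.  If `r ^ 2` divides
`s ^ 2 - 4 * z ^ r` and `r` does not divide `s`, then `r ^ 2` divides
`s ^ r - 2 ^ (r - 1) * s` -/
theorem stmt_12 (r : ℕ) (hr : r.Prime) (hodd : Odd r) (s z : ℤ)
    (h1 : (r : ℤ) ^ 2 ∣ s ^ 2 - 4 * z ^ r) (h2 : ¬ (r : ℤ) ∣ s) :
    (r : ℤ) ^ 2 ∣ s ^ r - 2 ^ (r - 1) * s := by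
  haveI : Fact r.Prime := ⟨hr⟩
  have hr2 : r ≠ 2 := by rintro rfl; exact ((fun h => Nat.not_odd_iff_even.mpr h) (by norm_num)) hodd
  -- Fermat's little theorem: r ∣ z^r - z
  have hferm : (r : ℤ) ∣ z ^ r - z := by
    have : ((z ^ r - z : ℤ) : ZMod r) = 0 := by
      push_cast
      rw [ZMod.pow_card]; ring
    exact (ZMod.intCast_zmod_eq_zero_iff_dvd _ _).mp this
  -- lifting: r^2 ∣ (z^r)^r - z^r
  have hlift : (r : ℤ) ^ 2 ∣ (z ^ r) ^ r - z ^ r := by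
    have := dvd_sub_pow_of_dvd_sub hferm 1
    simpa using this
  -- modular arithmetic mod r^2
  have h1m : s ^ 2 ≡ 4 * z ^ r [ZMOD ((r : ℤ) ^ 2)] :=
    (Int.modEq_iff_dvd.mpr h1).symm
  have hliftm : (z ^ r) ^ r ≡ z ^ r [ZMOD ((r : ℤ) ^ 2)] :=
    (Int.modEq_iff_dvd.mpr hlift).symm
  have hmain : (s ^ 2) ^ r ≡ 4 ^ (r - 1) * s ^ 2 [ZMOD ((r : ℤ) ^ 2)] := by
    calc (s ^ 2) ^ r ≡ (4 * z ^ r) ^ r [ZMOD ((r : ℤ) ^ 2)] := h1m.pow r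
      _ = 4 ^ (r - 1) * (4 * (z ^ r) ^ r) := by
          have h4r : (4 : ℤ) ^ r = 4 ^ (r - 1) * 4 := by
            conv_lhs => rw [show r = r - 1 + 1 from (Nat.succ_pred_eq_of_pos hr.pos).symm]
            rw [pow_succ]
          rw [mul_pow, h4r]; ring
      _ ≡ 4 ^ (r - 1) * (4 * z ^ r) [ZMOD ((r : ℤ) ^ 2)] :=
          (Int.ModEq.refl _).mul (hliftm.mul_left 4)
      _ ≡ 4 ^ (r - 1) * s ^ 2 [ZMOD ((r : ℤ) ^ 2)] :=
          (Int.ModEq.refl _).mul h1m.symm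
  have hprod : (r : ℤ) ^ 2 ∣ (s ^ r - 2 ^ (r - 1) * s) * (s ^ r + 2 ^ (r - 1) * s) := by
    have hid : (s ^ r - 2 ^ (r - 1) * s) * (s ^ r + 2 ^ (r - 1) * s)
        = (s ^ 2) ^ r - 4 ^ (r - 1) * s ^ 2 := by
      have h4 : (4 : ℤ) ^ (r - 1) = (2 ^ (r - 1)) ^ 2 := by
        rw [show (4 : ℤ) = 2 ^ 2 by norm_num, ← pow_mul, ← pow_mul, Nat.mul_comm]
      have hs2 : ((s : ℤ) ^ 2) ^ r = (s ^ r) ^ 2 := by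
        rw [← pow_mul, ← pow_mul, Nat.mul_comm]
      rw [h4, hs2]; ring
    rw [hid, ← Int.modEq_iff_dvd]
    exact hmain.symm
  -- show r does not divide the second factor
  have hB : ¬ (r : ℤ) ∣ s ^ r + 2 ^ (r - 1) * s := by
    intro hdvd
    have h2ne : (2 : ZMod r) ≠ 0 := by
      intro h
      have : (r : ℕ) ∣ 2 := by
        have := (ZMod.natCast_eq_zero_iff 2 r).mp (by push_cast; exact h)
        exact this
      exact hr2 ((Nat.prime_dvd_prime_iff_eq hr Nat.prime_two).mp this)
    have hsz : ((s ^ r + 2 ^ (r - 1) * s : ℤ) : ZMod r) = 0 :=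
      (ZMod.intCast_zmod_eq_zero_iff_dvd _ _).mpr hdvd
    have hsm : ((s : ℤ) : ZMod r) ^ r = ((s : ℤ) : ZMod r) := ZMod.pow_card _
    have h2m : (2 : ZMod r) ^ (r - 1) = 1 := ZMod.pow_card_sub_one_eq_one h2ne
    push_cast at hsz
    rw [hsm, h2m, one_mul] at hsz
    have : ((s : ℤ) : ZMod r) = 0 := by
      have htwo : (2 : ZMod r) * ((s : ℤ) : ZMod r) = 0 := by
        rw [two_mul]; exact hsz
    -- 2 is a unit in ZMod r
      rcases mul_eq_zero.mp htwo with h | h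
      · exact absurd h h2ne
      · exact h
    exact h2 ((ZMod.intCast_zmod_eq_zero_iff_dvd _ _).mp this)
  -- conclude by coprimality
  have hcop : IsCoprime ((r : ℤ)) (s ^ r + 2 ^ (r - 1) * s) :=
    (Prime.coprime_iff_not_dvd (Nat.prime_iff_prime_int.mp hr)).mpr hB
  exact (hcop.pow_left).dvd_of_dvd_mul_right hprod
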